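/- Every symmetric positive definite symplectic 2n×2n real matrix A can be written as A = [[I, 0], [C, I]] · [[G, 0], [0, G⁻¹]] · [[I, C], [0, I]], where G is an n×n symmetric positive definite matrix and C is an n×n symmetric matrix. -/

import Mathlib

open Matrix

/-- The standard symplectic matrix `J = [[0, I], [-I, 0]]`. -/
noncomputable def symplJ (n : ℕ) : Matrix (Fin n ⊕ Fin n) (Fin n ⊕ Fin n) ℝ :=
  Matrix.fromBlocks 0 1 (-1) 0

lemma posDef_toBlocks₁₁ {n : ℕ} {M : Matrix (Fin n ⊕ Fin n) (Fin n ⊕ Fin n) ℝ}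
    (hM : M.PosDef) : (M.toBlocks₁₁).PosDef := by
  refine posDef_iff_dotProduct_mulVec.mpr ⟨?_, ?_⟩
  · have h1 := hM.1
    ext i j
    have := congrFun (congrFun h1 (Sum.inl i)) (Sum.inl j)
    simpa [toBlocks₁₁, conjTranspose_apply] using this
  · intro x hx
    have hy : (Sum.elim x 0 : Fin n ⊕ Fin n → ℝ) ≠ 0 := by
      intro h
      apply hx
      ext i
      have := congrFun h (Sum.inl i)
      simpa using this
    have := hM.dotProduct_mulVec_pos hy
    have heq : (Sum.elim x 0 : Fin n ⊕ Fin n → ℝ) ⬝ᵥ M.mulVec (Sum.elim x 0) =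
        x ⬝ᵥ (M.toBlocks₁₁).mulVec x := by
      simp [dotProduct, mulVec, Fintype.sum_sum_type, toBlocks₁₁, Finset.mul_sum]
    rw [star_trivial] at this ⊢
    rw [heq] at this
    simpa using this

/-- Every symmetric positive definite symplectic `2n × 2n` real matrix `A` can be
written as `A = [[I, 0], [C, I]] · [[G, 0], [0, G⁻¹]] · [[I, C], [0, I]]`, where `G` is
symmetric positive definite and `C` is symmetric. -/
theorem posDef_symplectic_factorization (n : ℕ)
    (A : Matrix (Fin n ⊕ Fin n) (Fin n ⊕ Fin n) ℝ)
    (hsym : Aᵀ = A) (hpd : A.PosDef)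
    (hsympl : Aᵀ * symplJ n * A = symplJ n) :
    ∃ G C : Matrix (Fin n) (Fin n) ℝ,
      Gᵀ = G ∧ G.PosDef ∧ Cᵀ = C ∧
        A = Matrix.fromBlocks 1 0 C 1 * Matrix.fromBlocks G 0 0 G⁻¹ *
              Matrix.fromBlocks 1 C 0 1 := by
  set P := A.toBlocks₁₁ with hP
  set Q := A.toBlocks₁₂ with hQ
  set Q' := A.toBlocks₂₁ with hQ'
  set R := A.toBlocks₂₂ with hR
  have hA : A = fromBlocks P Q Q' R := (fromBlocks_toBlocks A).symm
  -- symmetry of blocks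
  have hsymB : fromBlocks Pᵀ Q'ᵀ Qᵀ Rᵀ = fromBlocks P Q Q' R := by
    rw [← fromBlocks_transpose, ← hA, hsym, hA]
  obtain ⟨hPsym, hQ'T, hQT, hRsym⟩ := fromBlocks_inj.mp hsymB
  -- symplectic block equations
  have hs := hsympl
  rw [hsym, hA, symplJ, fromBlocks_multiply, fromBlocks_multiply] at hs
  obtain ⟨e11, e12, e21, e22⟩ := fromBlocks_inj.mp hs
  have hQPQ : Q * P = P * Qᵀ := by
    rw [hQT]
    linear_combination (norm := noncomm_ring) -e11
  have hPR : P * R = 1 + Q * Q := by linear_combination (norm := noncomm_ring) e12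
  -- P is positive definite
  have hPd : P.PosDef := posDef_toBlocks₁₁ hpd
  have hdet : IsUnit P.det := hPd.det_pos.ne'.isUnit
  have hPinv : P * P⁻¹ = 1 := mul_nonsing_inv P hdet
  have hinvP : P⁻¹ * P = 1 := nonsing_inv_mul P hdet
  have hcanc : ∀ X : Matrix (Fin n) (Fin n) ℝ, P⁻¹ * (P * X) = X := fun X => by
    rw [← Matrix.mul_assoc, hinvP, Matrix.one_mul]
  have hcanc' : ∀ X : Matrix (Fin n) (Fin n) ℝ, P * (P⁻¹ * X) = X := fun X => by
    rw [← Matrix.mul_assoc, hPinv, Matrix.one_mul]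
  set C := P⁻¹ * Q with hC
  have hinvT : P⁻¹ᵀ = P⁻¹ := by rw [transpose_nonsing_inv, hPsym]
  -- C is symmetric
  have hCQ : Qᵀ * P⁻¹ = P⁻¹ * Q := by
    calc Qᵀ * P⁻¹ = P⁻¹ * (P * Qᵀ) * P⁻¹ := by rw [hcanc]
    _ = P⁻¹ * (Q * P) * P⁻¹ := by rw [hQPQ]
    _ = P⁻¹ * (Q * (P * P⁻¹)) := by rw [Matrix.mul_assoc, Matrix.mul_assoc]
    _ = P⁻¹ * Q := by rw [hPinv, Matrix.mul_one]
  have hCsym : Cᵀ = C := by rw [hC, transpose_mul, hinvT, hCQ]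
  refine ⟨P, C, hPsym, hPd, hCsym, ?_⟩
  -- block identities
  have hPC : P * C = Q := hcanc' Q
  have hCP : C * P = Q' := by
    rw [← hQT, hC, Matrix.mul_assoc, hQPQ, hcanc]
  have hCPC : C * P * C + P⁻¹ = R := by
    have hRval : R = P⁻¹ + P⁻¹ * (Q * Q) := by
      have h2 : P⁻¹ * (P * R) = P⁻¹ * (1 + Q * Q) := by rw [hPR]
      rw [hcanc, Matrix.mul_add, Matrix.mul_one] at h2
      exact h2
    rw [hCP, ← hQT, hC, ← Matrix.mul_assoc Qᵀ P⁻¹ Q, hCQ, hRval, Matrix.mul_assoc]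
    exact add_comm _ _
  rw [hA, fromBlocks_multiply, fromBlocks_multiply]
  refine fromBlocks_inj.mpr ⟨?_, ?_, ?_, ?_⟩
  · simp
  · simp [hPC]
  · simp [hCP]
  · simpa using hCPC.symm
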